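/- Let A > 0, B < 0, K, δ₀, Φ₀ ∈ ℝ. On the domain D = {ν ∈ ℝ : cos(√(−B)(ν + δ₀)) ≠ 0}, define Ψ(ν) = √(−B/A) / cos(√(−B)(ν + δ₀)) and Φ(ν) = (K√(−B)/A) tan(√(−B)(ν + δ₀)) + Φ₀. Then for every ν ∈ D one has Ψ'(ν)² = A Ψ(ν)⁴ + B Ψ(ν)² and Φ'(ν) = K Ψ(ν)². -/
import Mathlib


/-- the sec/tan solution of the first integral `Ψ'² = AΨ⁴ + BΨ²` (case
`C = 0`) together with `Φ' = KΨ²`, in the case `A > 0`, `B < 0`, on the domain where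
`cos(√(−B)(ν + δ₀)) ≠ 0`. -/
theorem brzr_sec_solution (A B K δ₀ Φ₀ : ℝ)
    (hA : 0 < A) (hB : B < 0) :
    ∀ ν : ℝ, Real.cos (Real.sqrt (-B) * (ν + δ₀)) ≠ 0 →
      (deriv (fun s => Real.sqrt (-B / A) / Real.cos (Real.sqrt (-B) * (s + δ₀))) ν) ^ 2
          = A * (Real.sqrt (-B / A) / Real.cos (Real.sqrt (-B) * (ν + δ₀))) ^ 4
            + B * (Real.sqrt (-B / A) / Real.cos (Real.sqrt (-B) * (ν + δ₀))) ^ 2 ∧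
      deriv (fun s => (K * Real.sqrt (-B) / A) * Real.tan (Real.sqrt (-B) * (s + δ₀)) + Φ₀) ν
          = K * (Real.sqrt (-B / A) / Real.cos (Real.sqrt (-B) * (ν + δ₀))) ^ 2 := by
  intro ν hcos
  have hAne : A ≠ 0 := ne_of_gt hA
  set c := Real.sqrt (-B) with hc
  set a := Real.sqrt (-B / A) with ha
  have hc2 : c ^ 2 = -B := Real.sq_sqrt (by linarith)
  have ha2 : a ^ 2 = -B / A := Real.sq_sqrt (by
    have : 0 < -B := by linarith
    positivity)
  have hu : HasDerivAt (fun s : ℝ => c * (s + δ₀)) c ν := by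
    simpa using (((hasDerivAt_id ν).add_const δ₀).const_mul c)
  have hcosd : HasDerivAt (fun s : ℝ => Real.cos (c * (s + δ₀)))
      (-Real.sin (c * (ν + δ₀)) * c) ν := hu.cos
  have h1 : HasDerivAt (fun s : ℝ => a / Real.cos (c * (s + δ₀)))
      (a * (-(-Real.sin (c * (ν + δ₀)) * c) / Real.cos (c * (ν + δ₀)) ^ 2)) ν := by
    simpa [div_eq_mul_inv] using (hcosd.inv hcos).const_mul a
  have htan : HasDerivAt (fun s : ℝ => (K * c / A) * Real.tan (c * (s + δ₀)) + Φ₀)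
      ((K * c / A) * (1 / Real.cos (c * (ν + δ₀)) ^ 2 * c)) ν := by
    exact (((Real.hasDerivAt_tan hcos).comp ν hu).const_mul (K * c / A)).add_const Φ₀
  set x := Real.cos (c * (ν + δ₀)) with hx
  set s := Real.sin (c * (ν + δ₀)) with hs
  have hsin : s ^ 2 = 1 - x ^ 2 := by
    have := Real.sin_sq_add_cos_sq (c * (ν + δ₀)); linarith
  constructor
  · rw [h1.deriv]
    calc (a * (-(-s * c) / x ^ 2)) ^ 2
        = a ^ 2 * c ^ 2 * s ^ 2 / (x ^ 2) ^ 2 := by ring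
      _ = (-B / A) * (-B) * (1 - x ^ 2) / (x ^ 2) ^ 2 := by rw [ha2, hc2, hsin]
      _ = A * (a / x) ^ 4 + B * (a / x) ^ 2 := by
          rw [show (a / x) ^ 4 = (a ^ 2) ^ 2 / (x ^ 2) ^ 2 by ring,
            show (a / x) ^ 2 = a ^ 2 / x ^ 2 by ring, ha2]
          field_simp
          ring
  · rw [htan.deriv]
    calc (K * c / A) * (1 / x ^ 2 * c)
        = K * (c ^ 2) / (A * x ^ 2) := by ring
      _ = K * (a / x) ^ 2 := by
          rw [show (a / x) ^ 2 = a ^ 2 / x ^ 2 by ring, ha2, hc2]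
          field_simp
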